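/- Let K and K_n (n ∈ ℕ) be nonempty compact convex subsets of E such that K has nonempty interior and d_H(K_n, K) → 0. Then for every ε > 0 there exists n_ε such that for all n ≥ n_ε, the set conv{ y ∈ K : dist(y, frontier K) ≥ ε } is contained in K_n. -/

import Mathlib

open Set

noncomputable section

/-- If `K` has nonempty interior and `K_n → K` in Hausdorff distance, then for every
`ε > 0` the inner parallel body `conv{y ∈ K | dist(y, frontier K) ≥ ε}` is eventually
contained in `K_n`. -/
theorem stmt_3 (d : ℕ) (hd : 1 ≤ d)
    (K : Set (EuclideanSpace ℝ (Fin d))) (Kn : ℕ → Set (EuclideanSpace ℝ (Fin d)))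
    (hK : K.Nonempty) (hKc : IsCompact K) (hKv : Convex ℝ K)
    (hKint : (interior K).Nonempty)
    (hKn : ∀ n, (Kn n).Nonempty) (hKnc : ∀ n, IsCompact (Kn n))
    (hKnv : ∀ n, Convex ℝ (Kn n))
    (hconv : Filter.Tendsto (fun n => Metric.hausdorffDist (Kn n) K)
      Filter.atTop (nhds 0)) :
    ∀ ε : ℝ, 0 < ε → ∃ N : ℕ, ∀ n ≥ N,
      convexHull ℝ {y ∈ K | ε ≤ Metric.infDist y (frontier K)} ⊆ Kn n := by
  intro ε hε
  have hε2 : 0 < ε / 2 := by positivity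
  have hN := Metric.tendsto_nhds.mp hconv (ε / 2) hε2
  rw [Filter.eventually_atTop] at hN
  obtain ⟨N, hN⟩ := hN
  refine ⟨N, fun n hn => ?_⟩
  have hKcl : IsClosed K := hKc.isClosed
  have hedist : EMetric.hausdorffEdist K (Kn n) ≠ ⊤ :=
    Metric.hausdorffEdist_ne_top_of_nonempty_of_bounded hK (hKn n)
      hKc.isBounded (hKnc n).isBounded
  have hhd : Metric.hausdorffDist (Kn n) K < ε / 2 := by
    have := hN n hn
    rwa [Real.dist_eq, sub_zero,
      abs_of_nonneg Metric.hausdorffDist_nonneg] at this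
  refine convexHull_min ?_ (hKnv n)
  intro y hy
  obtain ⟨hyK, hyd⟩ := hy
  -- the ε-ball around y is contained in K
  have hball : Metric.ball y ε ⊆ K := by
    have hdisj : ∀ z ∈ Metric.ball y ε, z ∉ frontier K := by
      intro z hz hzf
      have h1 : Metric.infDist y (frontier K) ≤ dist y z :=
        Metric.infDist_le_dist_of_mem hzf
      rw [Metric.mem_ball, dist_comm] at hz
      linarith
    have hyn : y ∉ frontier K := hdisj y (Metric.mem_ball_self hε)
    have hyint : y ∈ interior K := by
      have hycl : y ∈ closure K := subset_closure hyK
      rw [frontier, mem_diff, not_and, not_not] at hyn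
      exact hyn hycl
    have hsub : Metric.ball y ε ⊆ interior K ∪ (closure K)ᶜ := by
      intro z hz
      have := hdisj z hz
      rw [frontier, mem_diff, not_and, not_not] at this
      by_cases h : z ∈ closure K
      · exact Or.inl (this h)
      · exact Or.inr h
    have hconn : IsPreconnected (Metric.ball y ε) := (convex_ball y ε).isPreconnected
    have hdisj2 : Disjoint (interior K) (closure K)ᶜ :=
      disjoint_compl_right.mono_left interior_subset_closure
    have := hconn.subset_left_of_subset_union isOpen_interior
      isClosed_closure.isOpen_compl hdisj2 hsub
      ⟨y, Metric.mem_ball_self hε, hyint⟩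
    exact this.trans interior_subset
  by_contra hyn
  obtain ⟨f, c, hfa, hfy⟩ :=
    geometric_hahn_banach_closed_point (hKnv n) (hKnc n).isClosed hyn
  set u := (InnerProductSpace.toDual ℝ (EuclideanSpace ℝ (Fin d))).symm f with hu
  have hfu : ∀ x, f x = inner ℝ u x := by
    intro x
    rw [hu]
    exact (InnerProductSpace.toDual_symm_apply).symm
  have hune : u ≠ 0 := by
    intro h0
    obtain ⟨a, ha⟩ := hKn n
    have h1 : f a < c := hfa a ha
    have h2 := hfy
    simp only [hfu, h0, inner_zero_left] at h1 h2
    linarith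
  have hunorm : (0:ℝ) < ‖u‖ := norm_pos_iff.mpr hune
  set w : EuclideanSpace ℝ (Fin d) := ‖u‖⁻¹ • u with hw
  have hwnorm : ‖w‖ = 1 := by
    rw [hw, norm_smul, norm_inv, norm_norm, inv_mul_cancel₀ (ne_of_gt hunorm)]
  set z : EuclideanSpace ℝ (Fin d) := y + (ε / 2) • w with hz
  have hzK : z ∈ K := by
    apply hball
    rw [Metric.mem_ball, hz, dist_eq_norm]
    simp only [add_sub_cancel_left]
    rw [norm_smul, hwnorm, mul_one, Real.norm_eq_abs, abs_of_pos hε2]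
    linarith
  have hzfar : ∀ a ∈ Kn n, ε / 2 ≤ dist z a := by
    intro a ha
    have hCS : inner ℝ w (z - a) ≤ ‖z - a‖ := by
      calc (inner ℝ w (z - a) : ℝ) ≤ ‖w‖ * ‖z - a‖ := real_inner_le_norm w (z - a)
        _ = ‖z - a‖ := by rw [hwnorm, one_mul]
    have hwa : (inner ℝ w a : ℝ) < inner ℝ w y := by
      have h1 : f a < f y := lt_trans (hfa a ha) hfy
      rw [hfu, hfu] at h1
      have : ‖u‖⁻¹ * (inner ℝ u a : ℝ) < ‖u‖⁻¹ * (inner ℝ u y : ℝ) :=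
        mul_lt_mul_of_pos_left h1 (inv_pos.mpr hunorm)
      rw [hw, real_inner_smul_left, real_inner_smul_left]
      exact this
    have hwz : (inner ℝ w z : ℝ) = inner ℝ w y + ε / 2 := by
      rw [hz, inner_add_right, real_inner_smul_right,
        real_inner_self_eq_norm_sq, hwnorm]
      ring
    have : ε / 2 < inner ℝ w (z - a) := by
      rw [inner_sub_right, hwz]
      linarith
    rw [dist_eq_norm]
    linarith
  have hle : Metric.infDist z (Kn n) ≤ Metric.hausdorffDist K (Kn n) :=
    Metric.infDist_le_hausdorffDist_of_mem hzK hedist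
  have hge : ε / 2 ≤ Metric.infDist z (Kn n) := by
    obtain ⟨a, ha, heq⟩ := (hKnc n).exists_infDist_eq_dist (hKn n) z
    rw [heq]
    exact hzfar a ha
  rw [Metric.hausdorffDist_comm] at hle
  linarith
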